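/- Improved per-node bound for the distributed Gaussian mean estimation example: Let Z_{i,k}, for i = 1, ..., n (n ≥ 2) and k = 1, ..., K, be i.i.d. d-dimensional Gaussian random vectors with distribution N(μ, σ²I_d) for σ > 0, let the loss be ℓ(w, z) = ‖w − z‖₂², let each node output its local sample mean W_k = (1/n) Σ_{i=1}^n Z_{i,k}, and let the aggregate model be Ŵ = (1/K) Σ_{k=1}^K W_k. Then the expected generalization error satisfies E[Δ_A(S)] ≤ (σ²d/K)·√(2(1 + 1/n)²·log(n/(n−1))). -/

import Mathlib

open MeasureTheory ProbabilityTheory Real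
open scoped ENNReal NNReal

section OneDim

variable (m : ℝ) {v : ℝ≥0}

lemma gauss_transfer (hv : v ≠ 0) (f : ℝ → ℝ) :
    ∫ x, f x ∂gaussianReal m v = ∫ x, gaussianPDFReal m v x * f x := by
  rw [gaussianReal_of_var_ne_zero m hv]
  rw [show (gaussianPDF m v) = fun x => ((Real.toNNReal (gaussianPDFReal m v x) : ℝ≥0) : ℝ≥0∞)
    from rfl]
  rw [integral_withDensity_eq_integral_smul ((measurable_gaussianPDFReal m v).real_toNNReal) f]
  congr 1; ext x
  simp [NNReal.smul_def, Real.coe_toNNReal _ (gaussianPDFReal_nonneg m v x)]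

lemma gauss_integrable_iff (hv : v ≠ 0) (f : ℝ → ℝ) :
    Integrable f (gaussianReal m v) ↔
      Integrable (fun x => gaussianPDFReal m v x * f x) volume := by
  rw [gaussianReal_of_var_ne_zero m hv]
  rw [show (gaussianPDF m v) = fun x => ((Real.toNNReal (gaussianPDFReal m v x) : ℝ≥0) : ℝ≥0∞)
    from rfl]
  rw [integrable_withDensity_iff_integrable_smul ((measurable_gaussianPDFReal m v).real_toNNReal)]
  constructor <;> intro h <;> [skip; skip] <;>
  · refine h.congr (Filter.Eventually.of_forall fun x => ?_)
    simp [NNReal.smul_def, Real.coe_toNNReal _ (gaussianPDFReal_nonneg m v x)]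

end OneDim

section VolumeInts

variable {b : ℝ} (hb : 0 < b)

lemma vol_k1 : ∫ x : ℝ, x * rexp (-b * x ^ 2) = 0 := by
  have h := MeasureTheory.integral_neg_eq_self (fun x : ℝ => x * rexp (-b * x ^ 2)) volume
  simp only [neg_sq, neg_mul] at h
  rw [integral_neg] at h
  have h2 : ∫ x : ℝ, x * rexp (-b * x ^ 2) = ∫ x : ℝ, x * rexp (-(b * x ^ 2)) := by
    simp only [neg_mul]
  rw [h2]
  linarith [h]

lemma pow_two_eq_rpow (x : ℝ) : x ^ (2:ℝ) = x ^ 2 := by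
  rw [show (2:ℝ) = ((2:ℕ):ℝ) by norm_num, Real.rpow_natCast]

include hb in
lemma vol_i2 : Integrable (fun x : ℝ => x ^ 2 * rexp (-b * x ^ 2)) := by
  have h := integrable_rpow_mul_exp_neg_mul_sq hb (s := 2) (by norm_num)
  simpa [pow_two_eq_rpow] using h

include hb in
lemma vol_k2 : ∫ x : ℝ, x ^ 2 * rexp (-b * x ^ 2) = Real.sqrt (π / b) / (2 * b) := by
  have h2' := integral_comp_abs (f := fun t : ℝ => t ^ 2 * rexp (-b * t ^ 2))
  simp only [sq_abs] at h2'
  rw [h2']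
  have h2 : ∫ x in Set.Ioi (0:ℝ), x ^ 2 * rexp (-b * x ^ 2)
      = ∫ x in Set.Ioi (0:ℝ), x ^ (2:ℝ) * rexp (-b * x ^ (2:ℝ)) := by
    refine setIntegral_congr_fun measurableSet_Ioi (fun x _ => ?_)
    rw [pow_two_eq_rpow]
  rw [h2, integral_rpow_mul_exp_neg_mul_rpow two_pos (by norm_num) hb]
  have hG : Real.Gamma ((2 + 1) / 2) = Real.sqrt π / 2 := by
    rw [show ((2:ℝ) + 1) / 2 = 1/2 + 1 by norm_num, Real.Gamma_add_one (by norm_num),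
      Real.Gamma_one_half_eq]
    ring
  rw [hG]
  have hb32 : b ^ (-((2:ℝ) + 1) / 2) = (b * Real.sqrt b)⁻¹ := by
    rw [show -((2:ℝ)+1)/2 = -(1 + 1/2) by norm_num, Real.rpow_neg hb.le,
      Real.rpow_add hb, Real.rpow_one, ← Real.sqrt_eq_rpow]
  rw [hb32]
  have hsb : (0:ℝ) < Real.sqrt b := Real.sqrt_pos.mpr hb
  rw [Real.sqrt_div Real.pi_nonneg]
  field_simp

end VolumeInts

section GaussMoments

variable (m c : ℝ) {v : ℝ≥0}

lemma pdf_shift (y : ℝ) : gaussianPDFReal m v (y + m)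
    = (Real.sqrt (2*π*v))⁻¹ * rexp (-(2*(v:ℝ))⁻¹ * y^2) := by
  rw [gaussianPDFReal]
  congr 2
  ring

lemma gauss_shift_eq (hv : v ≠ 0) (f : ℝ → ℝ) :
    ∫ x, f x ∂gaussianReal m v = ∫ y, gaussianPDFReal m v (y + m) * f (y + m) := by
  rw [gauss_transfer m hv f,
    ← integral_add_right_eq_self (fun x => gaussianPDFReal m v x * f x) m]

variable (hv : v ≠ 0)
include hv

lemma hv_pos : (0:ℝ) < (v:ℝ) := by
  have := pos_iff_ne_zero.mpr hv
  exact_mod_cast this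

lemma hb_pos : (0:ℝ) < (2*(v:ℝ))⁻¹ := by
  have := hv_pos hv
  positivity

lemma c0_sqrt : (Real.sqrt (2*π*v))⁻¹ * Real.sqrt (π / (2*(v:ℝ))⁻¹) = 1 := by
  have hvp := hv_pos hv
  have h1 : π / (2*(v:ℝ))⁻¹ = 2*π*(v:ℝ) := by field_simp
  rw [h1]
  refine inv_mul_cancel₀ ?_
  have : (0:ℝ) < 2*π*(v:ℝ) := by positivity
  positivity

lemma gauss_int_sub : ∫ x, (x - c) ∂gaussianReal m v = m - c := by
  set b : ℝ := (2*(v:ℝ))⁻¹ with hbdef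
  have hb : 0 < b := hb_pos hv
  set c0 : ℝ := (Real.sqrt (2*π*v))⁻¹ with hc0
  rw [gauss_shift_eq m hv]
  have hfun : (fun y => gaussianPDFReal m v (y + m) * ((y + m) - c))
      = fun y => c0 * (y * rexp (-b * y^2)) + (c0 * (m - c)) * rexp (-b * y^2) := by
    funext y; rw [pdf_shift]; ring
  rw [hfun, integral_add (f := fun y => c0 * (y * rexp (-b * y^2)))
    (g := fun y => (c0 * (m - c)) * rexp (-b * y^2))
    ((integrable_mul_exp_neg_mul_sq hb).const_mul _)
    ((integrable_exp_neg_mul_sq hb).const_mul _), integral_const_mul, integral_const_mul,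
    vol_k1, integral_gaussian]
  have := c0_sqrt hv
  rw [← hbdef, ← hc0] at this
  linear_combination (m - c) * this

lemma gauss_integrable_sub : Integrable (fun x => x - c) (gaussianReal m v) := by
  rw [gauss_integrable_iff m hv]
  set b : ℝ := (2*(v:ℝ))⁻¹ with hbdef
  have hb : 0 < b := hb_pos hv
  set c0 : ℝ := (Real.sqrt (2*π*v))⁻¹ with hc0
  have h : Integrable (fun y => gaussianPDFReal m v (y + m) * ((y + m) - c)) volume := by
    have hfun : (fun y => gaussianPDFReal m v (y + m) * ((y + m) - c))
        = fun y => c0 * (y * rexp (-b * y^2)) + (c0 * (m - c)) * rexp (-b * y^2) := by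
      funext y; rw [pdf_shift]; ring
    rw [hfun]
    exact ((integrable_mul_exp_neg_mul_sq hb).const_mul _).add
      ((integrable_exp_neg_mul_sq hb).const_mul _)
  have h2 := h.comp_sub_right m
  simpa using h2

lemma gauss_int_sq : ∫ x, (x - c)^2 ∂gaussianReal m v = (m - c)^2 + (v:ℝ) := by
  set b : ℝ := (2*(v:ℝ))⁻¹ with hbdef
  have hb : 0 < b := hb_pos hv
  set c0 : ℝ := (Real.sqrt (2*π*v))⁻¹ with hc0
  rw [gauss_shift_eq m hv]
  have hfun : (fun y => gaussianPDFReal m v (y + m) * ((y + m) - c)^2)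
      = fun y => c0 * (y^2 * rexp (-b * y^2)) + ((2*(m-c)*c0) * (y * rexp (-b * y^2))
          + (c0 * (m - c)^2) * rexp (-b * y^2)) := by
    funext y; rw [pdf_shift]; ring
  rw [hfun, integral_add (f := fun y => c0 * (y^2 * rexp (-b * y^2)))
    (g := fun y => (2*(m-c)*c0) * (y * rexp (-b * y^2)) + (c0 * (m - c)^2) * rexp (-b * y^2))
    ((vol_i2 hb).const_mul _)
    (((integrable_mul_exp_neg_mul_sq hb).const_mul _).add
      ((integrable_exp_neg_mul_sq hb).const_mul _)),
    integral_add (f := fun y => (2*(m-c)*c0) * (y * rexp (-b * y^2)))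
    (g := fun y => (c0 * (m - c)^2) * rexp (-b * y^2))
    ((integrable_mul_exp_neg_mul_sq hb).const_mul _)
      ((integrable_exp_neg_mul_sq hb).const_mul _),
    integral_const_mul, integral_const_mul, integral_const_mul,
    vol_k1, vol_k2 hb, integral_gaussian]
  have h1 := c0_sqrt hv
  rw [← hbdef, ← hc0] at h1
  have hvp := hv_pos hv
  have h2b : c0 * (Real.sqrt (π / b) / (2*b)) = (v:ℝ) := by
    rw [hbdef] at *
    have h2 : 2 * (2*(v:ℝ))⁻¹ = (v:ℝ)⁻¹ := by field_simp
    rw [div_eq_mul_inv, ← mul_assoc, h1, h2, one_mul, inv_inv]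
  rw [h2b]
  linear_combination (m - c)^2 * h1

lemma gauss_integrable_sq : Integrable (fun x => (x - c)^2) (gaussianReal m v) := by
  rw [gauss_integrable_iff m hv]
  set b : ℝ := (2*(v:ℝ))⁻¹ with hbdef
  have hb : 0 < b := hb_pos hv
  set c0 : ℝ := (Real.sqrt (2*π*v))⁻¹ with hc0
  have h : Integrable (fun y => gaussianPDFReal m v (y + m) * ((y + m) - c)^2) volume := by
    have hfun : (fun y => gaussianPDFReal m v (y + m) * ((y + m) - c)^2)
        = fun y => c0 * (y^2 * rexp (-b * y^2)) + ((2*(m-c)*c0) * (y * rexp (-b * y^2))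
            + (c0 * (m - c)^2) * rexp (-b * y^2)) := by
      funext y; rw [pdf_shift]; ring
    rw [hfun]
    exact ((vol_i2 hb).const_mul _).add
      (((integrable_mul_exp_neg_mul_sq hb).const_mul _).add
        ((integrable_exp_neg_mul_sq hb).const_mul _))
  have h2 := h.comp_sub_right m
  simpa using h2

end GaussMoments

section PiHelpers

variable {ι : Type*} [Fintype ι] [DecidableEq ι] {α : Type*} [MeasurableSpace α]
  (μ : ι → Measure α) [∀ i, IsProbabilityMeasure (μ i)]

theorem pi_integral_prod (f : ι → α → ℝ) :
    ∫ x : ι → α, ∏ i, f i (x i) ∂Measure.pi μ = ∏ i, ∫ t, f i t ∂μ i :=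
  MeasureTheory.integral_fintype_prod_eq_prod (E := fun _ => α) f (μ := μ)

theorem pi_integrable_prod (f : ι → α → ℝ) (hf : ∀ i, Integrable (f i) (μ i)) :
    Integrable (fun x : ι → α => ∏ i, f i (x i)) (Measure.pi μ) :=
  MeasureTheory.Integrable.fintype_prod_dep (E := fun _ => α) (f := f) (μ := μ) hf

theorem single_eq_prod (i : ι) (f : α → ℝ) (x : ι → α) :
    f (x i) = ∏ j, (if j = i then f else fun _ => (1:ℝ)) (x j) := by
  rw [Finset.prod_eq_single i]
  · simp
  · intro j _ hj; simp [hj]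
  · intro h; exact absurd (Finset.mem_univ i) h

theorem pi_integral_single (i : ι) (f : α → ℝ) :
    ∫ x : ι → α, f (x i) ∂Measure.pi μ = ∫ t, f t ∂μ i := by
  simp_rw [single_eq_prod i f]
  rw [pi_integral_prod]
  rw [Finset.prod_eq_single i]
  · simp
  · intro j _ hj; simp [hj]
  · intro h; exact absurd (Finset.mem_univ i) h

theorem pi_integrable_single (i : ι) (f : α → ℝ) (hf : Integrable f (μ i)) :
    Integrable (fun x : ι → α => f (x i)) (Measure.pi μ) := by
  simp_rw [single_eq_prod i f]
  refine pi_integrable_prod μ _ (fun j => ?_)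
  by_cases h : j = i
  · subst h; simpa using hf
  · simpa [h] using (integrable_const (1:ℝ))

theorem pair_eq_prod {i i' : ι} (hne : i ≠ i') (f g : α → ℝ) (x : ι → α) :
    f (x i) * g (x i')
      = ∏ j, (if j = i then f else if j = i' then g else fun _ => (1:ℝ)) (x j) := by
  rw [← Finset.prod_subset (Finset.subset_univ ({i, i'} : Finset ι))
    (by intro j _ hj
        simp only [Finset.mem_insert, Finset.mem_singleton, not_or] at hj
        simp [hj.1, hj.2])]
  rw [Finset.prod_pair hne]
  simp [hne, hne.symm]

theorem pi_integral_pair {i i' : ι} (hne : i ≠ i') (f g : α → ℝ) :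
    ∫ x : ι → α, f (x i) * g (x i') ∂Measure.pi μ = (∫ t, f t ∂μ i) * ∫ t, g t ∂μ i' := by
  simp_rw [pair_eq_prod hne f g]
  rw [pi_integral_prod]
  rw [← Finset.prod_subset (Finset.subset_univ ({i, i'} : Finset ι))
    (by intro j _ hj
        simp only [Finset.mem_insert, Finset.mem_singleton, not_or] at hj
        simp [hj.1, hj.2])]
  rw [Finset.prod_pair hne]
  simp [hne, hne.symm]

theorem pi_integrable_pair {i i' : ι} (hne : i ≠ i') (f g : α → ℝ)
    (hf : Integrable f (μ i)) (hg : Integrable g (μ i')) :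
    Integrable (fun x : ι → α => f (x i) * g (x i')) (Measure.pi μ) := by
  simp_rw [pair_eq_prod hne f g]
  refine pi_integrable_prod μ _ (fun j => ?_)
  by_cases h : j = i
  · subst h; simpa [hne] using hf
  · by_cases h' : j = i'
    · subst h'; simpa [h] using hg
    · simpa [h, h'] using (integrable_const (1:ℝ))

end PiHelpers

section Cov

variable {d n K : ℕ} (μ0 : Fin d → ℝ) {σ : ℝ≥0} (hσ : σ ≠ 0)

local notation "πm" => Measure.pi (fun j : Fin d => gaussianReal (μ0 j) (σ^2))
local notation "νm" => Measure.pi (fun _ : Fin n => πm)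
local notation "Pm" => Measure.pi (fun _ : Fin K => νm)

include hσ

lemma hv2 : (σ^2 : ℝ≥0) ≠ 0 := pow_ne_zero 2 hσ

-- π-level
lemma psi_int (j : Fin d) : Integrable (fun z : Fin d → ℝ => z j - μ0 j) πm :=
  pi_integrable_single _ j (fun t => t - μ0 j) (gauss_integrable_sub (μ0 j) (μ0 j) (hv2 hσ))

lemma psi_val (j : Fin d) : ∫ z : Fin d → ℝ, (z j - μ0 j) ∂πm = 0 := by
  have h := pi_integral_single (fun j : Fin d => gaussianReal (μ0 j) (σ^2)) j (fun t => t - μ0 j)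
  have h2 := gauss_int_sub (μ0 j) (μ0 j) (hv2 hσ)
  simp only [sub_self] at h2
  exact h.trans h2

lemma psi2_int (j : Fin d) : Integrable (fun z : Fin d → ℝ => (z j - μ0 j)^2) πm :=
  pi_integrable_single _ j (fun t => (t - μ0 j)^2) (gauss_integrable_sq (μ0 j) (μ0 j) (hv2 hσ))

lemma psi2_val (j : Fin d) :
    ∫ z : Fin d → ℝ, (z j - μ0 j)^2 ∂πm = ((σ^2 : ℝ≥0) : ℝ) := by
  have h := pi_integral_single (fun j : Fin d => gaussianReal (μ0 j) (σ^2)) j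
    (fun t => (t - μ0 j)^2)
  have h2 := gauss_int_sq (μ0 j) (μ0 j) (hv2 hσ)
  simp only [sub_self] at h2
  rw [h, h2]
  norm_num

-- ν-level
lemma nu_int (i : Fin n) (j : Fin d) :
    Integrable (fun t : Fin n → Fin d → ℝ => t i j - μ0 j) νm :=
  pi_integrable_single _ i (fun z : Fin d → ℝ => z j - μ0 j) (psi_int μ0 hσ j)

lemma nu_val (i : Fin n) (j : Fin d) :
    ∫ t : Fin n → Fin d → ℝ, (t i j - μ0 j) ∂νm = 0 := by
  have h := pi_integral_single (fun _ : Fin n => πm) i (fun z => z j - μ0 j)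
  exact h.trans (psi_val μ0 hσ j)

lemma nu_cov_int (i i' : Fin n) (j : Fin d) :
    Integrable (fun t : Fin n → Fin d → ℝ => (t i j - μ0 j) * (t i' j - μ0 j)) νm := by
  by_cases h : i = i'
  · subst h
    have := pi_integrable_single (fun _ : Fin n => πm) i (fun z => (z j - μ0 j)^2)
      (psi2_int μ0 hσ j)
    refine this.congr (Filter.Eventually.of_forall fun t => ?_)
    ring
  · exact pi_integrable_pair (fun _ : Fin n => πm) h (fun z => z j - μ0 j)
      (fun z => z j - μ0 j) (psi_int μ0 hσ j) (psi_int μ0 hσ j)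

lemma nu_cov_val (i i' : Fin n) (j : Fin d) :
    ∫ t : Fin n → Fin d → ℝ, (t i j - μ0 j) * (t i' j - μ0 j) ∂νm
      = if i = i' then ((σ^2 : ℝ≥0) : ℝ) else 0 := by
  by_cases h : i = i'
  · subst h
    simp only [if_pos rfl]
    have h1 : ∫ t : Fin n → Fin d → ℝ, (t i j - μ0 j) * (t i j - μ0 j) ∂νm
        = ∫ t : Fin n → Fin d → ℝ, (t i j - μ0 j)^2 ∂νm := by
      congr 1; funext t; ring
    rw [h1]
    have h2 := pi_integral_single (fun _ : Fin n => πm) i (fun z => (z j - μ0 j)^2)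
    exact h2.trans (psi2_val μ0 hσ j)
  · rw [if_neg h]
    have h2 := pi_integral_pair (fun _ : Fin n => πm) h (fun z => z j - μ0 j)
      (fun z => z j - μ0 j)
    rw [h2, psi_val μ0 hσ j, mul_zero]

-- P-level
lemma P_cov_int (k k' : Fin K) (i i' : Fin n) (j : Fin d) :
    Integrable (fun s : Fin K → Fin n → Fin d → ℝ =>
      (s k i j - μ0 j) * (s k' i' j - μ0 j)) Pm := by
  by_cases h : k = k'
  · subst h
    exact pi_integrable_single (fun _ : Fin K => νm) k
      (fun t => (t i j - μ0 j) * (t i' j - μ0 j)) (nu_cov_int μ0 hσ i i' j)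
  · exact pi_integrable_pair (fun _ : Fin K => νm) h (fun t => t i j - μ0 j)
      (fun t => t i' j - μ0 j) (nu_int μ0 hσ i j) (nu_int μ0 hσ i' j)

lemma P_cov_val (k k' : Fin K) (i i' : Fin n) (j : Fin d) :
    ∫ s : Fin K → Fin n → Fin d → ℝ, (s k i j - μ0 j) * (s k' i' j - μ0 j) ∂Pm
      = if (k, i) = (k', i') then ((σ^2 : ℝ≥0) : ℝ) else 0 := by
  by_cases h : k = k'
  · subst h
    have h2 := pi_integral_single (fun _ : Fin K => νm) k
      (fun t => (t i j - μ0 j) * (t i' j - μ0 j))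
    rw [h2, nu_cov_val μ0 hσ i i' j]
    by_cases hi : i = i' <;> simp [hi]
  · have h2 := pi_integral_pair (fun _ : Fin K => νm) h (fun t => t i j - μ0 j)
      (fun t => t i' j - μ0 j)
    rw [h2, nu_val μ0 hσ i j, zero_mul, if_neg (by simp [h])]

end Cov
section Q

variable {d n K : ℕ} (μ0 : Fin d → ℝ) {σ : ℝ≥0} (hσ : σ ≠ 0)

local notation "πm" => Measure.pi (fun j : Fin d => gaussianReal (μ0 j) (σ^2))
local notation "νm" => Measure.pi (fun _ : Fin n => πm)
local notation "Pm" => Measure.pi (fun _ : Fin K => νm)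

lemma hpt (a : Fin K → Fin n → ℝ) (j : Fin d) (s : Fin K → Fin n → Fin d → ℝ) :
    (∑ k, ∑ i, a k i * (s k i j - μ0 j))^2
      = ∑ x : Fin K × Fin n, ∑ y : Fin K × Fin n,
          (a x.1 x.2 * a y.1 y.2) * ((s x.1 x.2 j - μ0 j) * (s y.1 y.2 j - μ0 j)) := by
  have h1 : ∑ k, ∑ i, a k i * (s k i j - μ0 j)
      = ∑ x : Fin K × Fin n, a x.1 x.2 * (s x.1 x.2 j - μ0 j) :=
    (Fintype.sum_prod_type
      (f := fun x : Fin K × Fin n => a x.1 x.2 * (s x.1 x.2 j - μ0 j))).symm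
  rw [sq, h1, Finset.sum_mul_sum]
  exact Finset.sum_congr rfl fun x _ => Finset.sum_congr rfl fun y _ => by ring

include hσ

lemma Q_int (a : Fin K → Fin n → ℝ) (j : Fin d) :
    Integrable (fun s : Fin K → Fin n → Fin d → ℝ =>
      (∑ k, ∑ i, a k i * (s k i j - μ0 j))^2) Pm := by
  have h : (fun s : Fin K → Fin n → Fin d → ℝ =>
      (∑ k, ∑ i, a k i * (s k i j - μ0 j))^2)
      = fun s => ∑ x : Fin K × Fin n, ∑ y : Fin K × Fin n,
          (a x.1 x.2 * a y.1 y.2) * ((s x.1 x.2 j - μ0 j) * (s y.1 y.2 j - μ0 j)) :=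
    funext (hpt μ0 a j)
  rw [h]
  refine integrable_finset_sum _ (fun x _ => integrable_finset_sum _ (fun y _ => ?_))
  exact (P_cov_int μ0 hσ x.1 y.1 x.2 y.2 j).const_mul _

lemma Q_val (a : Fin K → Fin n → ℝ) (j : Fin d) :
    ∫ s : Fin K → Fin n → Fin d → ℝ,
      (∑ k, ∑ i, a k i * (s k i j - μ0 j))^2 ∂Pm
      = ((σ^2 : ℝ≥0) : ℝ) * ∑ k, ∑ i, (a k i)^2 := by
  have h : (fun s : Fin K → Fin n → Fin d → ℝ =>
      (∑ k, ∑ i, a k i * (s k i j - μ0 j))^2)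
      = fun s => ∑ x : Fin K × Fin n, ∑ y : Fin K × Fin n,
          (a x.1 x.2 * a y.1 y.2) * ((s x.1 x.2 j - μ0 j) * (s y.1 y.2 j - μ0 j)) :=
    funext (hpt μ0 a j)
  rw [h, integral_finset_sum _ (fun x _ => integrable_finset_sum _ (fun y _ =>
    (P_cov_int μ0 hσ x.1 y.1 x.2 y.2 j).const_mul _))]
  have h2 : ∀ x : Fin K × Fin n,
      (∫ s : Fin K → Fin n → Fin d → ℝ, ∑ y : Fin K × Fin n,
        (a x.1 x.2 * a y.1 y.2) * ((s x.1 x.2 j - μ0 j) * (s y.1 y.2 j - μ0 j)) ∂Pm)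
      = ((σ^2 : ℝ≥0) : ℝ) * (a x.1 x.2)^2 := by
    intro x
    rw [integral_finset_sum _ (fun y _ => (P_cov_int μ0 hσ x.1 y.1 x.2 y.2 j).const_mul _)]
    have h3 : ∀ y : Fin K × Fin n,
        (∫ s : Fin K → Fin n → Fin d → ℝ,
          (a x.1 x.2 * a y.1 y.2) * ((s x.1 x.2 j - μ0 j) * (s y.1 y.2 j - μ0 j)) ∂Pm)
        = (a x.1 x.2 * a y.1 y.2) * (if x = y then ((σ^2 : ℝ≥0) : ℝ) else 0) := by
      intro y
      rw [integral_const_mul, P_cov_val μ0 hσ x.1 y.1 x.2 y.2 j]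
    simp_rw [h3]
    rw [Finset.sum_eq_single x]
    · simp [sq, mul_comm]
    · intro y _ hy
      rw [if_neg (fun h => hy h.symm), mul_zero]
    · intro h; exact absurd (Finset.mem_univ x) h
  simp_rw [h2]
  rw [← Finset.mul_sum]
  congr 1
  exact Fintype.sum_prod_type (f := fun x : Fin K × Fin n => (a x.1 x.2)^2)

end Q

section Main

variable {d n K : ℕ} (μ0 : Fin d → ℝ) {σ : ℝ≥0} (hσ : σ ≠ 0)

local notation "πm" => Measure.pi (fun j : Fin d => gaussianReal (μ0 j) (σ^2))
local notation "νm" => Measure.pi (fun _ : Fin n => πm)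
local notation "Pm" => Measure.pi (fun _ : Fin K => νm)

include hσ

lemma inner_int (a : Fin d → ℝ) :
    ∫ z : Fin d → ℝ, ∑ j, (a j - z j)^2 ∂πm
      = ∑ j, ((a j - μ0 j)^2 + ((σ^2 : ℝ≥0) : ℝ)) := by
  have hint : ∀ j : Fin d, Integrable (fun z : Fin d → ℝ => (a j - z j)^2) πm := by
    intro j
    have h0 : Integrable (fun t : ℝ => (a j - t)^2) (gaussianReal (μ0 j) (σ^2)) :=
      (gauss_integrable_sq (μ0 j) (a j) (hv2 hσ)).congr
        (Filter.Eventually.of_forall fun t => by ring)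
    exact pi_integrable_single _ j (fun t : ℝ => (a j - t)^2) h0
  rw [integral_finset_sum _ (fun j _ => hint j)]
  refine Finset.sum_congr rfl fun j _ => ?_
  refine Eq.trans (pi_integral_single (fun j : Fin d => gaussianReal (μ0 j) (σ^2)) j
    (fun t : ℝ => (a j - t)^2)) ?_
  have e1 : (fun t : ℝ => (a j - t)^2) = fun t => (t - a j)^2 := by funext t; ring
  rw [e1, gauss_int_sq (μ0 j) (a j) (hv2 hσ)]
  ring_nf

end Main

/-- **Improved per-node bound for distributed Gaussian mean estimation.**
For `Z_{i,k}`, `i = 1, …, n` (`n ≥ 2`), `k = 1, …, K`, i.i.d. `N(μ, σ²I_d)` on `ℝ^d`,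
squared `ℓ²` loss `ℓ(w, z) = ‖w − z‖₂² = ∑_j (w_j − z_j)²`, local sample means
`W_k = (1/n) ∑_i Z_{i,k}` and aggregate model `Ŵ = (1/K) ∑_k W_k`, the expected
generalization error satisfies `E[Δ_A(S)] ≤ (σ²d/K)·√(2(1 + 1/n)²·log(n/(n−1)))`. -/
theorem gaussian_mean_estimation_per_node_bound
    (d n K : ℕ) (hn : 2 ≤ n) (hK : 0 < K)
    (μ0 : Fin d → ℝ) (σ : ℝ≥0) (hσ : 0 < σ) :
    ∫ s : Fin K → Fin n → Fin d → ℝ,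
        ((∫ z, ∑ j : Fin d,
              (((K : ℝ)⁻¹ • ∑ k : Fin K, (n : ℝ)⁻¹ • ∑ i : Fin n, s k i) j - z j) ^ 2
            ∂(Measure.pi fun j : Fin d => gaussianReal (μ0 j) (σ ^ 2)))
          - (1 / (n * K) : ℝ) * ∑ k : Fin K, ∑ i : Fin n, ∑ j : Fin d,
              (((K : ℝ)⁻¹ • ∑ k' : Fin K, (n : ℝ)⁻¹ • ∑ i' : Fin n, s k' i') j
                - s k i j) ^ 2)
        ∂(Measure.pi fun _ : Fin K => (Measure.pi fun _ : Fin n =>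
          (Measure.pi fun j : Fin d => gaussianReal (μ0 j) (σ ^ 2))))
      ≤ ((σ : ℝ) ^ 2 * d / K) *
        Real.sqrt (2 * (1 + 1 / (n : ℝ)) ^ 2 * Real.log ((n : ℝ) / ((n : ℝ) - 1))) := by
  classical
  have hσ' : σ ≠ 0 := hσ.ne'
  have hn0 : (0:ℝ) < (n:ℝ) := by exact_mod_cast Nat.lt_of_lt_of_le Nat.zero_lt_two hn
  have hK0 : (0:ℝ) < (K:ℝ) := by exact_mod_cast hK
  set N : ℝ := (n:ℝ) * (K:ℝ) with hN
  have hN0 : (0:ℝ) < N := mul_pos hn0 hK0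
  set A1 : Fin K → Fin n → ℝ := fun _ _ => N⁻¹ with hA1
  set A2 : Fin K → Fin n → Fin K → Fin n → ℝ :=
    fun k0 i0 k i => N⁻¹ - (if k = k0 ∧ i = i0 then (1:ℝ) else 0) with hA2
  -- pointwise identities
  have pw1 : ∀ (s : Fin K → Fin n → Fin d → ℝ) (j : Fin d),
      ((K:ℝ)⁻¹ • ∑ k : Fin K, (n:ℝ)⁻¹ • ∑ i : Fin n, s k i) j - μ0 j
        = ∑ k : Fin K, ∑ i : Fin n, A1 k i * (s k i j - μ0 j) := by
    intro s j
    simp only [Finset.sum_apply, Pi.smul_apply, smul_eq_mul, hA1, mul_sub,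
      Finset.sum_sub_distrib, Finset.sum_const, Finset.card_univ, Fintype.card_fin,
      nsmul_eq_mul, ← Finset.mul_sum]
    rw [hN]
    field_simp
  have hdelta : ∀ (s : Fin K → Fin n → Fin d → ℝ) (j : Fin d) (k0 : Fin K) (i0 : Fin n),
      ∑ k : Fin K, ∑ i : Fin n,
        (if k = k0 ∧ i = i0 then (1:ℝ) else 0) * (s k i j - μ0 j)
        = s k0 i0 j - μ0 j := by
    intro s j k0 i0
    rw [Finset.sum_eq_single k0]
    · rw [Finset.sum_eq_single i0]
      · simp
      · intro i _ hi; simp [hi]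
      · intro h; exact absurd (Finset.mem_univ i0) h
    · intro k _ hk; simp [hk]
    · intro h; exact absurd (Finset.mem_univ k0) h
  have pw2 : ∀ (s : Fin K → Fin n → Fin d → ℝ) (k0 : Fin K) (i0 : Fin n) (j : Fin d),
      ((K:ℝ)⁻¹ • ∑ k' : Fin K, (n:ℝ)⁻¹ • ∑ i' : Fin n, s k' i') j - s k0 i0 j
        = ∑ k : Fin K, ∑ i : Fin n, A2 k0 i0 k i * (s k i j - μ0 j) := by
    intro s k0 i0 j
    have e1 : ((K:ℝ)⁻¹ • ∑ k' : Fin K, (n:ℝ)⁻¹ • ∑ i' : Fin n, s k' i') j - s k0 i0 j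
        = (((K:ℝ)⁻¹ • ∑ k' : Fin K, (n:ℝ)⁻¹ • ∑ i' : Fin n, s k' i') j - μ0 j)
          - (s k0 i0 j - μ0 j) := by ring
    rw [e1, pw1 s j, ← hdelta s j k0 i0, ← Finset.sum_sub_distrib]
    refine Finset.sum_congr rfl fun k _ => ?_
    rw [← Finset.sum_sub_distrib]
    refine Finset.sum_congr rfl fun i _ => ?_
    rw [hA2, hA1]
    ring
  -- sums of squared coefficients
  have sum_A1 : (∑ k : Fin K, ∑ i : Fin n, (A1 k i)^2) = N⁻¹ := by
    simp only [hA1, Finset.sum_const, Finset.card_univ, Fintype.card_fin, nsmul_eq_mul]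
    rw [hN]
    field_simp
  have sum_A2 : ∀ (k0 : Fin K) (i0 : Fin n),
      (∑ k : Fin K, ∑ i : Fin n, (A2 k0 i0 k i)^2) = 1 - N⁻¹ := by
    intro k0 i0
    have e : ∀ (k : Fin K) (i : Fin n), (A2 k0 i0 k i)^2
        = N⁻¹ * N⁻¹ - (if k = k0 ∧ i = i0 then (1:ℝ) else 0) * (2 * N⁻¹ - 1) := by
      intro k i
      rw [hA2]
      by_cases h : k = k0 ∧ i = i0 <;> simp [h] <;> ring
    simp only [e, Finset.sum_sub_distrib, Finset.sum_const, Finset.card_univ,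
      Fintype.card_fin, nsmul_eq_mul]
    have e2 : ∑ k : Fin K, ∑ i : Fin n,
        (if k = k0 ∧ i = i0 then (1:ℝ) else 0) * (2 * N⁻¹ - 1) = 2 * N⁻¹ - 1 := by
      rw [Finset.sum_eq_single k0]
      · rw [Finset.sum_eq_single i0]
        · simp
        · intro i _ hi; simp [hi]
        · intro h; exact absurd (Finset.mem_univ i0) h
      · intro k _ hk; simp [hk]
      · intro h; exact absurd (Finset.mem_univ k0) h
    rw [e2, hN]
    field_simp
    ring
  simp only [inner_int μ0 hσ', pw1, pw2]
  have hInt1 : Integrable (fun s : Fin K → Fin n → Fin d → ℝ =>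
      ∑ x : Fin d, ((∑ k : Fin K, ∑ i : Fin n, A1 k i * (s k i x - μ0 x)) ^ 2
        + ((σ^2 : ℝ≥0) : ℝ)))
      (Measure.pi fun _ : Fin K => Measure.pi fun _ : Fin n =>
        Measure.pi fun j : Fin d => gaussianReal (μ0 j) (σ ^ 2)) :=
    integrable_finset_sum _ (fun j _ => (Q_int μ0 hσ' A1 j).add (integrable_const _))
  have hInt2 : Integrable (fun s : Fin K → Fin n → Fin d → ℝ =>
      1 / N * ∑ x : Fin K, ∑ x_1 : Fin n, ∑ x_2 : Fin d,
        (∑ k : Fin K, ∑ i : Fin n, A2 x x_1 k i * (s k i x_2 - μ0 x_2)) ^ 2)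
      (Measure.pi fun _ : Fin K => Measure.pi fun _ : Fin n =>
        Measure.pi fun j : Fin d => gaussianReal (μ0 j) (σ ^ 2)) :=
    (integrable_finset_sum _ (fun k0 _ => integrable_finset_sum _ (fun i0 _ =>
      integrable_finset_sum _ (fun j _ => Q_int μ0 hσ' (A2 k0 i0) j)))).const_mul _
  rw [integral_sub hInt1 hInt2,
    integral_finset_sum (f := fun (j : Fin d) (s : Fin K → Fin n → Fin d → ℝ) =>
      ((∑ k : Fin K, ∑ i : Fin n, A1 k i * (s k i j - μ0 j)) ^ 2 + ((σ^2 : ℝ≥0) : ℝ)))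
      Finset.univ (fun j _ => (Q_int μ0 hσ' A1 j).add (integrable_const _)),
    integral_const_mul,
    integral_finset_sum (f := fun (k0 : Fin K) (s : Fin K → Fin n → Fin d → ℝ) =>
      ∑ i0 : Fin n, ∑ j : Fin d,
        (∑ k : Fin K, ∑ i : Fin n, A2 k0 i0 k i * (s k i j - μ0 j)) ^ 2)
      Finset.univ (fun k0 _ => integrable_finset_sum _ (fun i0 _ =>
      integrable_finset_sum _ (fun j _ => Q_int μ0 hσ' (A2 k0 i0) j)))]
  have hv1 : ∀ j : Fin d,
      (∫ s : Fin K → Fin n → Fin d → ℝ,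
        ((∑ k : Fin K, ∑ i : Fin n, A1 k i * (s k i j - μ0 j)) ^ 2 + ((σ^2 : ℝ≥0) : ℝ))
        ∂(Measure.pi fun _ : Fin K => Measure.pi fun _ : Fin n =>
          Measure.pi fun j : Fin d => gaussianReal (μ0 j) (σ ^ 2)))
      = ((σ^2 : ℝ≥0) : ℝ) * N⁻¹ + ((σ^2 : ℝ≥0) : ℝ) := by
    intro j
    rw [integral_add (Q_int μ0 hσ' A1 j) (integrable_const _), Q_val μ0 hσ' A1 j, sum_A1,
      integral_const]
    simp
  have hv2tot : ∀ (k0 : Fin K) (i0 : Fin n),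
      (∫ s : Fin K → Fin n → Fin d → ℝ,
        ∑ j : Fin d, (∑ k : Fin K, ∑ i : Fin n, A2 k0 i0 k i * (s k i j - μ0 j)) ^ 2
        ∂(Measure.pi fun _ : Fin K => Measure.pi fun _ : Fin n =>
          Measure.pi fun j : Fin d => gaussianReal (μ0 j) (σ ^ 2)))
      = (d : ℝ) * (((σ^2 : ℝ≥0) : ℝ) * (1 - N⁻¹)) := by
    intro k0 i0
    rw [integral_finset_sum (f := fun (j : Fin d) (s : Fin K → Fin n → Fin d → ℝ) =>
        (∑ k : Fin K, ∑ i : Fin n, A2 k0 i0 k i * (s k i j - μ0 j)) ^ 2)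
        Finset.univ (fun j _ => Q_int μ0 hσ' (A2 k0 i0) j),
      Finset.sum_congr rfl (fun j _ => (Q_val μ0 hσ' (A2 k0 i0) j).trans
        (by rw [sum_A2 k0 i0])),
      Finset.sum_const, Finset.card_univ, Fintype.card_fin, nsmul_eq_mul]
  have hv3tot : ∀ k0 : Fin K,
      (∫ s : Fin K → Fin n → Fin d → ℝ,
        ∑ i0 : Fin n, ∑ j : Fin d,
          (∑ k : Fin K, ∑ i : Fin n, A2 k0 i0 k i * (s k i j - μ0 j)) ^ 2
        ∂(Measure.pi fun _ : Fin K => Measure.pi fun _ : Fin n =>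
          Measure.pi fun j : Fin d => gaussianReal (μ0 j) (σ ^ 2)))
      = (n : ℝ) * ((d : ℝ) * (((σ^2 : ℝ≥0) : ℝ) * (1 - N⁻¹))) := by
    intro k0
    rw [integral_finset_sum (f := fun (i0 : Fin n) (s : Fin K → Fin n → Fin d → ℝ) =>
        ∑ j : Fin d, (∑ k : Fin K, ∑ i : Fin n, A2 k0 i0 k i * (s k i j - μ0 j)) ^ 2)
        Finset.univ (fun i0 _ => integrable_finset_sum _
          (fun j _ => Q_int μ0 hσ' (A2 k0 i0) j)),
      Finset.sum_congr rfl (fun i0 _ => hv2tot k0 i0),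
      Finset.sum_const, Finset.card_univ, Fintype.card_fin, nsmul_eq_mul]
  rw [Finset.sum_congr rfl (fun j _ => hv1 j),
    Finset.sum_congr rfl (fun k0 (_ : k0 ∈ Finset.univ) => hv3tot k0),
    Finset.sum_const, Finset.sum_const, Finset.card_univ, Finset.card_univ,
    Fintype.card_fin, Fintype.card_fin, nsmul_eq_mul, nsmul_eq_mul]
  -- now a pure real-number inequality
  have hval : (d : ℝ) * (((σ^2 : ℝ≥0) : ℝ) * N⁻¹ + ((σ^2 : ℝ≥0) : ℝ))
      - 1 / N * ((K : ℝ) * ((n : ℝ) * ((d : ℝ) * (((σ^2 : ℝ≥0) : ℝ) * (1 - N⁻¹)))))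
      = ((σ : ℝ)^2 * d / K) * (2 / (n : ℝ)) := by
    have hc : ((σ^2 : ℝ≥0) : ℝ) = (σ : ℝ)^2 := by push_cast; ring
    rw [hc, hN]
    field_simp
    ring
  refine le_trans (le_of_eq hval) ?_
  have hnn2 : (2:ℝ) ≤ (n:ℝ) := by exact_mod_cast hn
  have hlog : 1 / (n:ℝ) ≤ Real.log ((n:ℝ) / ((n:ℝ) - 1)) := by
    have hpos : (0:ℝ) < (n:ℝ) / ((n:ℝ) - 1) := by
      apply div_pos hn0; linarith
    rw [Real.le_log_iff_exp_le hpos]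
    have h1 : 1 - 1/(n:ℝ) ≤ Real.exp (-(1/(n:ℝ))) := by
      have := Real.add_one_le_exp (-(1/(n:ℝ)))
      linarith
    have h2 : (0:ℝ) < 1 - 1/(n:ℝ) := by
      have : 1/(n:ℝ) < 1 := by
        rw [div_lt_one hn0]; linarith
      linarith
    have h4 : (Real.exp (-(1/(n:ℝ))))⁻¹ ≤ (1 - 1/(n:ℝ))⁻¹ :=
      inv_anti₀ h2 h1
    rw [Real.exp_neg, inv_inv] at h4
    have h5 : (1 - 1/(n:ℝ))⁻¹ = (n:ℝ)/((n:ℝ)-1) := by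
      field_simp
    rw [h5] at h4
    exact h4
  have harg : (2/(n:ℝ))^2 ≤ 2 * (1 + 1/(n:ℝ))^2 * Real.log ((n:ℝ) / ((n:ℝ) - 1)) := by
    have hu : (0:ℝ) < 1/(n:ℝ) := by positivity
    have key : (2/(n:ℝ))^2 ≤ 2 * (1 + 1/(n:ℝ))^2 * (1/(n:ℝ)) := by
      have expand : 2 * (1 + 1/(n:ℝ))^2 * (1/(n:ℝ)) - (2/(n:ℝ))^2
          = 2 * (1/(n:ℝ)) * (1 + (1/(n:ℝ))^2) := by
        field_simp
        ring
      nlinarith [mul_nonneg hu.le (sq_nonneg (1/(n:ℝ)))]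
    exact le_trans key (mul_le_mul_of_nonneg_left hlog (by positivity))
  have hsq : 2/(n:ℝ) ≤ Real.sqrt (2 * (1 + 1/(n:ℝ))^2 * Real.log ((n:ℝ) / ((n:ℝ) - 1))) := by
    calc 2/(n:ℝ) = Real.sqrt ((2/(n:ℝ))^2) := (Real.sqrt_sq (by positivity)).symm
      _ ≤ _ := Real.sqrt_le_sqrt harg
  apply mul_le_mul_of_nonneg_left hsq
  positivity
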